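/- The three-dimensional transverse intersection product μ₃ on the enlarged complex E3_N is associative: for all x, y, z ∈ E3_N, μ₃(μ₃(x, y), z) = μ₃(x, μ₃(y, z)). -/

import Mathlib

/-- Basis elements of the one-dimensional enlarged complex of period `N`:
points `P a`, elemental sticks `S a` (the interval `[a, a+1]`), and
infinitesimal sticks `I a`. -/
inductive B (N : ℕ) : Type where
  | P : ZMod N → B N
  | S : ZMod N → B N
  | I : ZMod N → B N
  deriving DecidableEq

/-- The enlarged one-dimensional chain complex: the free ℚ-vector space on `B N`. -/
abbrev EC (N : ℕ) : Type := B N →₀ ℚ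

namespace B

variable {N : ℕ}

/-- Codimension: 1 for points, 0 for sticks and infinitesimal sticks. -/
def cod : B N → ℕ
  | P _ => 1
  | _ => 0

/-- Basis element viewed in `EC N`. -/
noncomputable def e (u : B N) : EC N := Finsupp.single u 1

/-- The transverse intersection product on basis elements. -/
noncomputable def muB : B N → B N → EC N
  | P _, P _ => 0
  | P a, S b => if b = a ∨ b = a - 1 then Finsupp.single (P a) (1/2) else 0
  | S b, P a => if b = a ∨ b = a - 1 then Finsupp.single (P a) (1/2) else 0
  | P a, I b => if b = a then Finsupp.single (P a) (1/4) else 0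
  | I b, P a => if b = a then Finsupp.single (P a) (1/4) else 0
  | S a, S b =>
      if b = a then
        Finsupp.single (I a) (-1) + Finsupp.single (S a) 1 + Finsupp.single (I (a+1)) (-1)
      else if b = a + 1 then Finsupp.single (I (a+1)) 1
      else if b = a - 1 then Finsupp.single (I a) 1
      else 0
  | S a, I b => if b = a ∨ b = a + 1 then Finsupp.single (I b) (1/2) else 0
  | I b, S a => if b = a ∨ b = a + 1 then Finsupp.single (I b) (1/2) else 0
  | I a, I b => if b = a then Finsupp.single (I a) (1/4) else 0

/-- Boundary on basis elements: `∂ (S a) = P (a+1) - P a`, zero otherwise. -/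
noncomputable def bdB : B N → EC N
  | S a => Finsupp.single (P (a+1)) 1 - Finsupp.single (P a) 1
  | _ => 0

/-- Augmentation on basis elements. -/
def epsB : B N → ℚ
  | P _ => 1
  | _ => 0

end B

/-- Bilinear extension of the basis product to `EC N`. -/
noncomputable def mu {N : ℕ} (x y : EC N) : EC N :=
  x.sum fun u cu => y.sum fun v cv => (cu * cv) • B.muB u v

/-- Linear extension of the boundary to `EC N`. -/
noncomputable def bd {N : ℕ} (x : EC N) : EC N := x.sum fun u cu => cu • B.bdB u

/-- Augmentation `ε : EC N → ℚ`. -/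
noncomputable def eps {N : ℕ} (x : EC N) : ℚ := x.sum fun u cu => cu * B.epsB u

/-- The augmentation pairing `⟨x, y⟩ = ε (μ x y)`. -/
noncomputable def pair {N : ℕ} (x y : EC N) : ℚ := eps (mu x y)

/-- The subcomplex `C_N` spanned by points and elemental sticks. -/
noncomputable def Csub (N : ℕ) : Submodule ℚ (EC N) :=
  Submodule.span ℚ
    (Set.range (fun a : ZMod N => Finsupp.single (B.P a) (1 : ℚ)) ∪
     Set.range (fun a : ZMod N => Finsupp.single (B.S a) (1 : ℚ)))

/-- Basis triples for the three-dimensional complex. -/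
abbrev B3 (N : ℕ) : Type := B N × B N × B N

/-- The enlarged three-dimensional chain complex: free ℚ-vector space on `B3 N`. -/
abbrev E3 (N : ℕ) : Type := B3 N →₀ ℚ

/-- Codimension of a basis triple. -/
def cod3 {N : ℕ} (u : B3 N) : ℕ := u.1.cod + u.2.1.cod + u.2.2.cod

/-- Basis triple viewed in `E3 N`. -/
noncomputable def e3 {N : ℕ} (u : B3 N) : E3 N := Finsupp.single u 1

/-- Trilinear map `EC N → EC N → EC N → E3 N`, `x ⊗ y ⊗ z`. -/
noncomputable def t3 {N : ℕ} (x y z : EC N) : E3 N :=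
  x.sum fun u₁ c₁ => y.sum fun u₂ c₂ => z.sum fun u₃ c₃ =>
    Finsupp.single (u₁, u₂, u₃) (c₁ * c₂ * c₃)

/-- The three-dimensional intersection product on basis triples, with Koszul sign. -/
noncomputable def mu3B {N : ℕ} (u v : B3 N) : E3 N :=
  ((-1 : ℚ) ^ (u.2.1.cod * v.1.cod + u.2.2.cod * v.1.cod + u.2.2.cod * v.2.1.cod)) •
    t3 (B.muB u.1 v.1) (B.muB u.2.1 v.2.1) (B.muB u.2.2 v.2.2)

/-- Bilinear extension of the three-dimensional product to `E3 N`. -/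
noncomputable def mu3 {N : ℕ} (x y : E3 N) : E3 N :=
  x.sum fun u cu => y.sum fun v cv => (cu * cv) • mu3B u v

/-- The three-dimensional boundary on basis triples. -/
noncomputable def bd3B {N : ℕ} (u : B3 N) : E3 N :=
  t3 (B.bdB u.1) (B.e u.2.1) (B.e u.2.2)
    + ((-1 : ℚ) ^ u.1.cod) • t3 (B.e u.1) (B.bdB u.2.1) (B.e u.2.2)
    + ((-1 : ℚ) ^ (u.1.cod + u.2.1.cod)) • t3 (B.e u.1) (B.e u.2.1) (B.bdB u.2.2)

/-- Linear extension of the three-dimensional boundary to `E3 N`. -/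
noncomputable def bd3 {N : ℕ} (x : E3 N) : E3 N := x.sum fun u cu => cu • bd3B u

/-- The three-dimensional augmentation `ε₃`. -/
noncomputable def eps3 {N : ℕ} (x : E3 N) : ℚ :=
  x.sum fun u cu => cu * (B.epsB u.1 * B.epsB u.2.1 * B.epsB u.2.2)

/-- The three-dimensional augmentation pairing. -/
noncomputable def pair3 {N : ℕ} (x y : E3 N) : ℚ := eps3 (mu3 x y)


section Dev
variable {N : ℕ}
open B Finsupp

-- bilinear structure of mu
lemma mu_zero_left (y : EC N) : mu 0 y = 0 := by simp [mu]

lemma mu_single_left (u : B N) (c : ℚ) (y : EC N) :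
    mu (Finsupp.single u c) y = y.sum fun v d => (c * d) • muB u v := by
  unfold mu
  rw [Finsupp.sum_single_index]
  simp

lemma mu_add_left (x x' y : EC N) : mu (x + x') y = mu x y + mu x' y := by
  unfold mu
  rw [Finsupp.sum_add_index]
  · intro u _; simp
  · intro u _ c1 c2; simp [add_mul, add_smul, Finsupp.sum_add]

lemma mu_zero_right (x : EC N) : mu x 0 = 0 := by simp [mu]

lemma mu_single_right (x : EC N) (v : B N) (d : ℚ) :
    mu x (Finsupp.single v d) = x.sum fun u c => (c * d) • muB u v := by
  unfold mu
  congr 1; funext u c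
  rw [Finsupp.sum_single_index]
  simp

lemma mu_add_right (x y y' : EC N) : mu x (y + y') = mu x y + mu x y' := by
  unfold mu
  rw [← Finsupp.sum_add]
  congr 1; funext u c
  rw [Finsupp.sum_add_index]
  · intro v _; simp
  · intro v _ c1 c2; simp [mul_add, add_smul]

lemma mu_smul_left (c : ℚ) (x y : EC N) : mu (c • x) y = c • mu x y := by
  unfold mu
  rw [Finsupp.sum_smul_index]
  · rw [Finsupp.smul_sum]; congr 1; funext u d
    rw [Finsupp.smul_sum]; congr 1; funext v e
    rw [mul_assoc, mul_smul]
  · intro u; simp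

lemma mu_smul_right (c : ℚ) (x y : EC N) : mu x (c • y) = c • mu x y := by
  unfold mu
  rw [Finsupp.smul_sum]; congr 1; funext u d
  rw [Finsupp.sum_smul_index]
  · rw [Finsupp.smul_sum]; congr 1; funext v e
    rw [smul_smul]; ring_nf
  · intro v; simp

end Dev

section Dev2
variable {N : ℕ}
open B Finsupp

noncomputable def t3L : EC N →ₗ[ℚ] EC N →ₗ[ℚ] EC N →ₗ[ℚ] E3 N :=
  Finsupp.lsum ℚ fun u1 => LinearMap.toSpanSingleton ℚ _ <|
    Finsupp.lsum ℚ fun u2 => LinearMap.toSpanSingleton ℚ _ <|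
      Finsupp.lsum ℚ fun u3 => LinearMap.toSpanSingleton ℚ _ (e3 (u1,u2,u3))

lemma t3_eq (x y z : EC N) : t3 x y z = t3L x y z := by
  unfold t3 t3L
  rw [Finsupp.lsum_apply, LinearMap.finsupp_sum_apply, LinearMap.finsupp_sum_apply]
  congr 1; funext u1 c1
  rw [LinearMap.toSpanSingleton_apply, LinearMap.smul_apply, LinearMap.smul_apply,
    Finsupp.lsum_apply, LinearMap.finsupp_sum_apply]
  rw [Finsupp.smul_sum]
  congr 1; funext u2 c2
  rw [LinearMap.toSpanSingleton_apply, LinearMap.smul_apply,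
    Finsupp.lsum_apply, Finsupp.smul_sum, Finsupp.smul_sum]
  congr 1; funext u3 c3
  rw [LinearMap.toSpanSingleton_apply]
  simp only [e3, Finsupp.smul_single, smul_eq_mul, mul_one, mul_assoc]

end Dev2

section Dev3
variable {N : ℕ}
open B Finsupp

lemma mu3_single_left (u : B3 N) (c : ℚ) (y : E3 N) :
    mu3 (Finsupp.single u c) y = y.sum fun v d => (c * d) • mu3B u v := by
  unfold mu3
  rw [Finsupp.sum_single_index]
  simp

lemma mu3_add_left (x x' y : E3 N) : mu3 (x + x') y = mu3 x y + mu3 x' y := by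
  unfold mu3
  rw [Finsupp.sum_add_index]
  · intro u _; simp
  · intro u _ c1 c2; simp [add_mul, add_smul, Finsupp.sum_add]

lemma mu3_single_right (x : E3 N) (v : B3 N) (d : ℚ) :
    mu3 x (Finsupp.single v d) = x.sum fun u c => (c * d) • mu3B u v := by
  unfold mu3
  congr 1; funext u c
  rw [Finsupp.sum_single_index]
  simp

lemma mu3_add_right (x y y' : E3 N) : mu3 x (y + y') = mu3 x y + mu3 x y' := by
  unfold mu3
  rw [← Finsupp.sum_add]
  congr 1; funext u c
  rw [Finsupp.sum_add_index]
  · intro v _; simp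
  · intro v _ c1 c2; simp [mul_add, add_smul]

lemma mu3_smul_left (c : ℚ) (x y : E3 N) : mu3 (c • x) y = c • mu3 x y := by
  unfold mu3
  rw [Finsupp.sum_smul_index]
  · rw [Finsupp.smul_sum]; congr 1; funext u d
    rw [Finsupp.smul_sum]; congr 1; funext v e
    rw [mul_assoc, mul_smul]
  · intro u; simp

lemma mu3_smul_right (c : ℚ) (x y : E3 N) : mu3 x (c • y) = c • mu3 x y := by
  unfold mu3
  rw [Finsupp.smul_sum]; congr 1; funext u d
  rw [Finsupp.sum_smul_index]
  · rw [Finsupp.smul_sum]; congr 1; funext v e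
    rw [smul_smul]; ring_nf
  · intro v; simp

lemma mu_e_right (x : EC N) (w : B N) : mu x (B.e w) = x.sum fun b q => q • muB b w := by
  rw [B.e, mu_single_right]; simp

lemma mu_e_left (u : B N) (x : EC N) : mu (B.e u) x = x.sum fun b q => q • muB u b := by
  rw [B.e, mu_single_left]; simp

lemma mu3_e_right (x : E3 N) (w : B3 N) : mu3 x (e3 w) = x.sum fun u c => c • mu3B u w := by
  rw [e3, mu3_single_right]; simp

lemma mu3_e_left (u : B3 N) (x : E3 N) : mu3 (e3 u) x = x.sum fun v c => c • mu3B u v := by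
  rw [e3, mu3_single_left]; simp

end Dev3

section Dev4
variable {N : ℕ}
open B Finsupp

lemma t3_sum3 (f1 f2 f3 : B N → EC N) (X Y Z : EC N) :
    t3 (X.sum fun b c => c • f1 b) (Y.sum fun b c => c • f2 b) (Z.sum fun b c => c • f3 b)
      = X.sum fun b1 c1 => Y.sum fun b2 c2 => Z.sum fun b3 c3 =>
          (c1 * c2 * c3) • t3 (f1 b1) (f2 b2) (f3 b3) := by
  rw [t3_eq, map_finsuppSum t3L X, LinearMap.finsupp_sum_apply, LinearMap.finsupp_sum_apply]
  congr 1; funext b1 c1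
  rw [map_smul, LinearMap.smul_apply, LinearMap.smul_apply,
    map_finsuppSum (t3L (f1 b1)) Y, LinearMap.finsupp_sum_apply, Finsupp.smul_sum]
  congr 1; funext b2 c2
  rw [map_smul, LinearMap.smul_apply, map_finsuppSum, Finsupp.smul_sum, Finsupp.smul_sum]
  congr 1; funext b3 c3
  rw [map_smul, ← t3_eq, smul_smul, smul_smul, mul_assoc]

lemma t3_mu3B_sum (g : B3 N → E3 N) (X Y Z : EC N) :
    ((t3 X Y Z).sum fun u c => c • g u)
      = X.sum fun b1 c1 => Y.sum fun b2 c2 => Z.sum fun b3 c3 =>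
          (c1 * c2 * c3) • g (b1, b2, b3) := by
  have h : ((t3 X Y Z).sum fun u c => c • g u)
      = (Finsupp.lsum ℚ fun u => LinearMap.toSpanSingleton ℚ (E3 N) (g u)) (t3 X Y Z) := by
    rw [Finsupp.lsum_apply]; congr 1
  rw [h]
  unfold t3
  rw [map_finsuppSum]
  congr 1; funext b1 c1
  rw [map_finsuppSum]
  congr 1; funext b2 c2
  rw [map_finsuppSum]
  congr 1; funext b3 c3
  rw [Finsupp.lsum_single, LinearMap.toSpanSingleton_apply]

lemma cod_muB (u v : B N) : ∀ b ∈ (B.muB u v).support, b.cod = u.cod + v.cod := by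
  intro b hb
  rw [Finsupp.mem_support_iff] at hb
  cases u <;> cases v <;> cases b <;>
    simp_all [muB, cod, Finsupp.single_apply, Finsupp.add_apply] <;>
    split_ifs at hb <;> simp_all

end Dev4

section Grind
variable {N : ℕ}
open B Finsupp

lemma mu_single_single (u v : B N) (c d : ℚ) :
    mu (Finsupp.single u c) (Finsupp.single v d) = (c * d) • B.muB u v := by
  rw [mu_single_left, Finsupp.sum_single_index]; simp

lemma zm1 (hN : 3 ≤ N) : ∀ x : ZMod N, ¬(x + 1 = x) := by
  haveI : NeZero N := ⟨by omega⟩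
  haveI : Fact (1 < N) := ⟨by omega⟩
  intro x h
  have : (1 : ZMod N) = 0 := by linear_combination h
  exact one_ne_zero this

lemma zm2 (hN : 3 ≤ N) : ∀ x : ZMod N, ¬(x + 1 + 1 = x) := by
  haveI : NeZero N := ⟨by omega⟩
  intro x h
  have h2 : ((2:ℕ) : ZMod N) = 0 := by push_cast; linear_combination h
  rw [ZMod.natCast_eq_zero_iff] at h2
  have := Nat.le_of_dvd (by norm_num) h2
  omega

lemma zm1' (hN : 3 ≤ N) : ∀ x : ZMod N, ¬(x = x + 1) := fun x h => zm1 hN x h.symm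
lemma zm2' (hN : 3 ≤ N) : ∀ x : ZMod N, ¬(x = x + 1 + 1) := fun x h => zm2 hN x h.symm

set_option maxHeartbeats 1000000 in
lemma muB_assocG (hN : 3 ≤ N) (u v w : B N) :
    mu (B.muB u v) (B.e w) = mu (B.e u) (B.muB v w) := by
  have h1 := zm1 hN; have h2 := zm2 hN; have h1' := zm1' hN; have h2' := zm2' hN
  cases u <;> cases v <;> cases w <;>
  simp only [muB, B.e, eq_sub_iff_add_eq] <;>
  (try split_ifs) <;>
    (try casesm* _ ∨ _) <;>
    subst_vars <;>
    simp only [mu_add_left, mu_add_right, mu_zero_left, mu_zero_right, mu_single_single, muB,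
      Finsupp.single_zero, smul_zero, zero_add, add_zero, eq_sub_iff_add_eq] <;>
    split_ifs <;>
    (try casesm* _ ∨ _) <;>
    subst_vars <;>
    (try exact absurd (by assumption) (h1 _)) <;>
    (try exact absurd (by assumption) (h1' _)) <;>
    (try exact absurd (by assumption) (h2 _)) <;>
    (try exact absurd (by assumption) (h2' _)) <;>
    (try simp only [add_left_inj] at *) <;>
    subst_vars <;>
    (try exact absurd (by assumption) (h1 _)) <;>
    (try exact absurd (by assumption) (h1' _)) <;>
    (try exact absurd (by assumption) (h2 _)) <;>
    (try exact absurd (by assumption) (h2' _)) <;>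
    simp_all [Finsupp.smul_single, smul_add, ← Finsupp.single_neg, ← Finsupp.single_add,
      sub_eq_add_neg, -Finsupp.single_mul] <;>
    (try norm_num [-Finsupp.single_mul])
end Grind

section Dev5
variable {N : ℕ}
open B Finsupp

lemma L1 (k2 k3 : ℕ) (X Y Z : EC N) (hY : ∀ b ∈ Y.support, b.cod = k2)
    (hZ : ∀ b ∈ Z.support, b.cod = k3) (w : B3 N) :
    mu3 (t3 X Y Z) (e3 w)
      = ((-1:ℚ) ^ (k2 * w.1.cod + k3 * w.1.cod + k3 * w.2.1.cod)) •
          t3 (mu X (B.e w.1)) (mu Y (B.e w.2.1)) (mu Z (B.e w.2.2)) := by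
  rw [mu3_e_right, t3_mu3B_sum, mu_e_right, mu_e_right, mu_e_right, t3_sum3, Finsupp.smul_sum]
  refine Finsupp.sum_congr fun b1 hb1 => ?_
  rw [Finsupp.smul_sum]
  refine Finsupp.sum_congr fun b2 hb2 => ?_
  rw [Finsupp.smul_sum]
  refine Finsupp.sum_congr fun b3 hb3 => ?_
  simp only [mu3B]
  rw [hY b2 hb2, hZ b3 hb3, smul_comm]

lemma L2 (k1 k2 : ℕ) (X Y Z : EC N) (hX : ∀ b ∈ X.support, b.cod = k1)
    (hY : ∀ b ∈ Y.support, b.cod = k2) (u : B3 N) :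
    mu3 (e3 u) (t3 X Y Z)
      = ((-1:ℚ) ^ (u.2.1.cod * k1 + u.2.2.cod * k1 + u.2.2.cod * k2)) •
          t3 (mu (B.e u.1) X) (mu (B.e u.2.1) Y) (mu (B.e u.2.2) Z) := by
  rw [mu3_e_left, t3_mu3B_sum, mu_e_left, mu_e_left, mu_e_left, t3_sum3, Finsupp.smul_sum]
  refine Finsupp.sum_congr fun b1 hb1 => ?_
  rw [Finsupp.smul_sum]
  refine Finsupp.sum_congr fun b2 hb2 => ?_
  rw [Finsupp.smul_sum]
  refine Finsupp.sum_congr fun b3 hb3 => ?_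
  simp only [mu3B]
  rw [hX b1 hb1, hY b2 hb2, smul_comm]

lemma muB_assoc (hN : 3 ≤ N) (u v w : B N) :
    mu (B.muB u v) (B.e w) = mu (B.e u) (B.muB v w) := muB_assocG hN u v w

lemma mu3B_assoc (hN : 3 ≤ N) (u v w : B3 N) :
    mu3 (mu3B u v) (e3 w) = mu3 (e3 u) (mu3B v w) := by
  obtain ⟨u1, u2, u3⟩ := u
  obtain ⟨v1, v2, v3⟩ := v
  obtain ⟨w1, w2, w3⟩ := w
  simp only [mu3B]
  rw [mu3_smul_left, mu3_smul_right,
    L1 (u2.cod + v2.cod) (u3.cod + v3.cod) _ _ _ (cod_muB u2 v2) (cod_muB u3 v3),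
    L2 (v1.cod + w1.cod) (v2.cod + w2.cod) _ _ _ (cod_muB v1 w1) (cod_muB v2 w2)]
  rw [muB_assoc hN u1 v1 w1, muB_assoc hN u2 v2 w2, muB_assoc hN u3 v3 w3]
  rw [smul_smul, smul_smul, ← pow_add, ← pow_add]
  congr 2
  ring

end Dev5

section Dev6
variable {N : ℕ}
open B Finsupp

lemma mu3_zero_left (y : E3 N) : mu3 0 y = 0 := by simp [mu3]
lemma mu3_zero_right (x : E3 N) : mu3 x 0 = 0 := by simp [mu3]

lemma single_eq_smul_e3 (u : B3 N) (c : ℚ) : (Finsupp.single u c : E3 N) = c • e3 u := by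
  simp [e3, Finsupp.smul_single]

lemma mu3_e_e (u v : B3 N) : mu3 (e3 u) (e3 v) = mu3B u v := by
  rw [mu3_e_right, e3, Finsupp.sum_single_index] <;> simp

lemma mu3_assoc_aux (N : ℕ) (hN : 3 ≤ N) :
    ∀ x y z : E3 N, mu3 (mu3 x y) z = mu3 x (mu3 y z) := by
  intro x y z
  induction x using Finsupp.induction_linear with
  | zero => simp [mu3_zero_left]
  | add a b ha hb => simp [mu3_add_left, ha, hb]
  | single u c =>
    induction y using Finsupp.induction_linear with
    | zero => simp [mu3_zero_left, mu3_zero_right]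
    | add a b ha hb => simp [mu3_add_left, mu3_add_right, ha, hb]
    | single v d =>
      induction z using Finsupp.induction_linear with
      | zero => simp [mu3_zero_right]
      | add a b ha hb => simp [mu3_add_right, ha, hb]
      | single w e =>
        rw [single_eq_smul_e3 u, single_eq_smul_e3 v, single_eq_smul_e3 w]
        simp only [mu3_smul_left, mu3_smul_right, mu3_e_e, smul_smul]
        rw [mu3B_assoc hN]
        congr 1
        ring

end Dev6


/-- the three-dimensional intersection product is associative. -/
theorem mu3_assoc (N : ℕ) (hN : 3 ≤ N) :
    ∀ x y z : E3 N, mu3 (mu3 x y) z = mu3 x (mu3 y z) := mu3_assoc_aux N hN
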